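/- Let φ, κ be positive reals with φ ≥ 1, and set m = φ·log₂(κ) and n'' = log₂(κ)/φ (assume these are positive integers and n'' ≤ m). Then C(m, n'') ≤ κ^( log₂(e)·(2/e + 1/φ) ). -/

import Mathlib

/-- Claim `par_poly`: with `m = φ·log₂ κ` and `n'' = log₂(κ)/φ` positive integers,
`C(m, n'') ≤ κ^(log₂(e)·(2/e + 1/φ))`. -/
theorem subcommittee_count_poly (φ κ : ℝ) (hφ : 1 ≤ φ) (hκ : 0 < κ)
    (M N : ℕ) (hM : (M : ℝ) = φ * Real.logb 2 κ) (hN : (N : ℝ) = Real.logb 2 κ / φ)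
    (hNpos : 0 < N) (hNM : N ≤ M) :
    (Nat.choose M N : ℝ) ≤ κ ^ (Real.logb 2 (Real.exp 1) * (2 / Real.exp 1 + 1 / φ)) := by
  have hφ0 : (0:ℝ) < φ := lt_of_lt_of_le one_pos hφ
  have hNr : (0:ℝ) < N := by exact_mod_cast hNpos
  have hL : Real.logb 2 κ = N * φ := by
    field_simp at hN; linarith
  have hMr : (M:ℝ) = N * φ ^ 2 := by rw [hM, hL]; ring
  have he : (0:ℝ) < Real.exp 1 := Real.exp_pos 1
  have hlog2 : (0:ℝ) < Real.log 2 := Real.log_pos (by norm_num)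
  -- Step 1 : C(M,N) ≤ (e φ²)^N
  have hfac : ((N:ℝ)) ^ N ≤ Real.exp 1 ^ N * (N.factorial : ℝ) := by
    have h := Real.pow_div_factorial_le_exp (x := (N:ℝ)) hNr.le N
    have hfpos : (0:ℝ) < (N.factorial : ℝ) := by exact_mod_cast N.factorial_pos
    rw [div_le_iff₀ hfpos] at h
    calc ((N:ℝ)) ^ N ≤ Real.exp (N:ℝ) * (N.factorial : ℝ) := h
      _ = Real.exp 1 ^ N * (N.factorial : ℝ) := by
          rw [← Real.exp_nat_mul]; norm_num
  have step1 : (Nat.choose M N : ℝ) ≤ (Real.exp 1 * φ ^ 2) ^ N := by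
    have h1 : (Nat.choose M N : ℝ) ≤ ((M:ℝ)) ^ N / (N.factorial : ℝ) := by
      have := Nat.choose_le_pow_div (α := ℝ) N M
      simpa using this
    have hfpos : (0:ℝ) < (N.factorial : ℝ) := by exact_mod_cast N.factorial_pos
    have h2 : ((M:ℝ)) ^ N / (N.factorial : ℝ) ≤ (Real.exp 1 * φ ^ 2) ^ N := by
      rw [div_le_iff₀ hfpos, hMr, mul_pow, mul_pow]
      have hφpow : (0:ℝ) ≤ (φ ^ 2) ^ N := by positivity
      calc ((N:ℝ)) ^ N * (φ ^ 2) ^ N ≤ (Real.exp 1 ^ N * (N.factorial : ℝ)) * (φ ^ 2) ^ N :=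
            mul_le_mul_of_nonneg_right hfac hφpow
        _ = Real.exp 1 ^ N * (φ ^ 2) ^ N * (N.factorial : ℝ) := by ring
    exact h1.trans h2
  -- `log φ ≤ φ / e`
  have hlogφ : Real.log φ ≤ φ / Real.exp 1 := by
    have h := Real.log_le_sub_one_of_pos (x := φ / Real.exp 1) (by positivity)
    rw [Real.log_div (by positivity) he.ne', Real.log_exp] at h
    linarith
  -- Step 2 : (e φ²)^N ≤ κ ^ c
  have hlogκ : Real.log κ = (N * φ) * Real.log 2 := by
    have : Real.log κ / Real.log 2 = N * φ := hL
    field_simp at this; linarith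
  have step2 : (Real.exp 1 * φ ^ 2) ^ N
      ≤ κ ^ (Real.logb 2 (Real.exp 1) * (2 / Real.exp 1 + 1 / φ)) := by
    have hbase : (0:ℝ) < Real.exp 1 * φ ^ 2 := by positivity
    rw [Real.rpow_def_of_pos hκ, ← Real.rpow_natCast _ N,
      Real.rpow_def_of_pos hbase]
    apply Real.exp_le_exp.mpr
    rw [Real.log_mul he.ne' (by positivity), Real.log_exp,
      Real.log_pow, hlogκ]
    have hc : Real.logb 2 (Real.exp 1) = 1 / Real.log 2 := by
      unfold Real.logb; rw [Real.log_exp]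
    rw [hc]
    have hkey : (N:ℝ) * Real.log φ ≤ N * (φ / Real.exp 1) :=
      mul_le_mul_of_nonneg_left hlogφ hNr.le
    have hexpand : 1 / Real.log 2 * (2 / Real.exp 1 + 1 / φ) * ((N * φ) * Real.log 2)
        = 2 * (N * (φ / Real.exp 1)) + N := by
      field_simp
    push_cast
    nlinarith [hkey, hexpand]
  exact step1.trans step2
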